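/- Let s be a natural number and let M : Matrix (Fin s × G) (Fin s × G) R be a block matrix all of whose blocks are Hadamard matrices: for all p, q ∈ Fin s there exists a p q : G → R such that M (p,i) (q,j) = a p q (i + j) for all i, j ∈ G. Define M'' : Matrix (Fin s) (Fin s) R by M'' p q = ∑_{g ∈ G} a p q g (the eigenvalue of the (p,q)-block), and let q(x) be the characteristic polynomial of M''. Then evaluating q at the matrix M gives a square-zero matrix: (Polynomial.aeval M (Matrix.charpoly M''))^2 = 0. -/

import Mathlib

open Polynomial

namespace KRaux

theorem sq_sum {S : Type*} [CommRing S] (h2 : (2 : S) = 0) {ι : Type*} (t : Finset ι)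
    (f : ι → S) : (∑ i ∈ t, f i) ^ 2 = ∑ i ∈ t, f i ^ 2 := by
  induction t using Finset.cons_induction with
  | empty => simp
  | cons i t hi ih =>
    rw [Finset.sum_cons, Finset.sum_cons, add_sq, h2, ih]
    ring

theorem gg {k : ℕ} (g : Fin k → ZMod 2) : g + g = 0 := by
  funext x
  exact CharTwo.add_self_eq_zero _

theorem hc {k : ℕ} (x y : Fin k → ZMod 2) : x + (x + y) = y := by
  rw [← add_assoc, gg, zero_add]

variable (k : ℕ) (R : Type*) [CommRing R] [CharP R 2]

theorem two_eq_zeroC :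
    (2 : AddMonoidAlgebra R (Fin k → ZMod 2)) = 0 := by
  calc (2 : AddMonoidAlgebra R (Fin k → ZMod 2))
      = algebraMap R (AddMonoidAlgebra R (Fin k → ZMod 2)) 2 := (map_ofNat _ 2).symm
    _ = algebraMap R (AddMonoidAlgebra R (Fin k → ZMod 2)) 0 :=
        congrArg _ (CharTwo.two_eq_zero)
    _ = 0 := map_zero _

/-- The augmentation map. -/
noncomputable def eps : AddMonoidAlgebra R (Fin k → ZMod 2) →ₐ[R] R :=
  AddMonoidAlgebra.lift R R (Fin k → ZMod 2) 1

theorem eps_apply (u : AddMonoidAlgebra R (Fin k → ZMod 2)) :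
    eps k R u = u.coeff.sum fun _ c => c := by
  rw [eps, AddMonoidAlgebra.lift_apply]
  simp

theorem eps_symm_apply (f : (Fin k → ZMod 2) → R) :
    eps k R (AddMonoidAlgebra.ofCoeff (Finsupp.equivFunOnFinite.symm f)) = ∑ g, f g := by
  rw [eps_apply, Finsupp.sum_fintype]
  · simp
  · intro g; rfl

theorem sq_eq (u : AddMonoidAlgebra R (Fin k → ZMod 2)) :
    u ^ 2 = algebraMap R _ ((eps k R u) ^ 2) := by
  have halg : ∀ c : R, algebraMap R (AddMonoidAlgebra R (Fin k → ZMod 2)) c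
      = AddMonoidAlgebra.single 0 c := by
    intro c
    simp [AddMonoidAlgebra.coe_algebraMap]
  conv_lhs => rw [← AddMonoidAlgebra.sum_coeff_single u]
  rw [Finsupp.sum, sq_sum (two_eq_zeroC k R), eps_apply, Finsupp.sum,
    sq_sum CharTwo.two_eq_zero, map_sum]
  refine Finset.sum_congr rfl fun g _ => ?_
  rw [sq, sq, AddMonoidAlgebra.single_mul_single, gg, halg]

/-- The basic Hadamard matrices as a monoid hom. -/
noncomputable def had : Multiplicative (Fin k → ZMod 2) →*
    Matrix (Fin k → ZMod 2) (Fin k → ZMod 2) R where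
  toFun g := Matrix.of fun i j => if i + j = g.toAdd then 1 else 0
  map_one' := by
    ext i j
    show (if i + j = (1 : Multiplicative (Fin k → ZMod 2)).toAdd then (1:R) else 0)
      = (1 : Matrix (Fin k → ZMod 2) (Fin k → ZMod 2) R) i j
    rw [Matrix.one_apply, toAdd_one]
    refine if_congr ?_ rfl rfl
    constructor
    · intro h
      have h2 := hc i j
      rw [h, add_zero] at h2
      exact h2
    · intro h
      rw [h]
      exact gg j
  map_mul' x y := by
    ext i j
    show (if i + j = x.toAdd + y.toAdd then (1 : R) else 0) = _
    rw [Matrix.mul_apply]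
    set g := x.toAdd
    set h := y.toAdd
    have step : ∀ l : Fin k → ZMod 2,
        (Matrix.of fun i j => if i + j = g then (1:R) else 0) i l *
        (Matrix.of fun i j => if i + j = h then (1:R) else 0) l j
        = if l = i + g then (if i + j = g + h then (1:R) else 0) else 0 := by
      intro l
      rw [Matrix.of_apply, Matrix.of_apply]
      by_cases h1 : l = i + g
      · subst h1
        rw [if_pos (hc i g), if_pos rfl, one_mul]
        refine if_congr ?_ rfl rfl
        have e : g + (i + g + j) = i + j := by
          rw [← add_assoc, add_comm g (i + g), add_assoc i g g, gg, add_zero]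
        constructor
        · intro H
          rw [← e, H]
        · intro H
          exact add_left_cancel (e.trans H)
      · rw [if_neg (fun H => h1 (by rw [← H, hc])), zero_mul, if_neg h1]
    rw [Finset.sum_congr rfl fun l _ => step l, Finset.sum_ite_eq' Finset.univ]
    simp

/-- The algebra map from the group algebra to matrices. -/
noncomputable def phi : AddMonoidAlgebra R (Fin k → ZMod 2) →ₐ[R]
    Matrix (Fin k → ZMod 2) (Fin k → ZMod 2) R :=
  AddMonoidAlgebra.lift R _ (Fin k → ZMod 2) (had k R)

theorem phi_symm_apply (f : (Fin k → ZMod 2) → R) (i j : Fin k → ZMod 2) :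
    phi k R (AddMonoidAlgebra.ofCoeff (Finsupp.equivFunOnFinite.symm f)) i j = f (i + j) := by
  have h1 : phi k R (AddMonoidAlgebra.ofCoeff (Finsupp.equivFunOnFinite.symm f))
      = ∑ g : Fin k → ZMod 2, f g • had k R (Multiplicative.ofAdd g) := by
    rw [phi, AddMonoidAlgebra.lift_apply, Finsupp.sum_fintype]
    · simp
    · intro g; rw [zero_smul]
  rw [h1, Matrix.sum_apply]
  simp only [Matrix.smul_apply, had, MonoidHom.coe_mk, OneHom.coe_mk, Matrix.of_apply,
    toAdd_ofAdd, smul_eq_mul, mul_ite, mul_one, mul_zero]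
  rw [Finset.sum_ite_eq]
  simp

end KRaux

theorem keller_rosemarin_conjecture (k s : ℕ) (R : Type*) [CommRing R] [CharP R 2]
    (M : Matrix (Fin s × (Fin k → ZMod 2)) (Fin s × (Fin k → ZMod 2)) R)
    (a : Fin s → Fin s → (Fin k → ZMod 2) → R)
    (hM : ∀ p q (i j : Fin k → ZMod 2), M (p, i) (q, j) = a p q (i + j)) :
    (Polynomial.aeval M (Matrix.charpoly (Matrix.of fun p q => ∑ g, a p q g))) ^ 2 = 0 := by
  classical
  open KRaux in
  set C := AddMonoidAlgebra R (Fin k → ZMod 2) with hC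
  set B : Matrix (Fin s) (Fin s) C :=
    Matrix.of (fun p q => AddMonoidAlgebra.ofCoeff (Finsupp.equivFunOnFinite.symm (a p q))) with hB
  set M'' : Matrix (Fin s) (Fin s) R := Matrix.of (fun p q => ∑ g, a p q g) with hM''
  have hBmap : B.map (KRaux.eps k R) = M'' := by
    ext p q
    rw [Matrix.map_apply, hB, Matrix.of_apply, KRaux.eps_symm_apply]
    rfl
  set q : Polynomial R := M''.charpoly with hq
  set p : Polynomial C := B.charpoly with hp
  have hmapq : p.map ((KRaux.eps k R) : C →+* R) = q := by
    rw [hq, ← hBmap, hp]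
    exact (Matrix.charpoly_map B ((KRaux.eps k R) : C →+* R)).symm
  set r : Polynomial C := p - q.map (algebraMap R C) with hr
  have hrc : ∀ n, KRaux.eps k R (r.coeff n) = 0 := by
    intro n
    rw [hr, Polynomial.coeff_sub, map_sub, Polynomial.coeff_map, AlgHom.commutes,
      ← hmapq, Polynomial.coeff_map]
    simp
  have h2CX : (2 : Polynomial C) = 0 := by
    rw [← map_ofNat (Polynomial.C : C →+* Polynomial C) 2, KRaux.two_eq_zeroC, map_zero]
  have hr2 : r * r = 0 := by
    rw [← sq]
    conv_lhs => rw [Polynomial.as_sum_support r]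
    rw [sq_sum h2CX]
    refine Finset.sum_eq_zero fun n _ => ?_
    have hcc : r.coeff n * r.coeff n = 0 := by
      rw [← sq, KRaux.sq_eq, hrc n]
      simp
    rw [sq, Polynomial.monomial_mul_monomial, hcc, Polynomial.monomial_zero_right]
  have hCH : Polynomial.aeval B p = 0 := Matrix.aeval_self_charpoly B
  have key : (Polynomial.aeval B q) ^ 2 = 0 := by
    have h1 : Polynomial.aeval B q = Polynomial.aeval B (q.map (algebraMap R C)) :=
      (Polynomial.aeval_map_algebraMap C B q).symm
    have h2 : q.map (algebraMap R C) = p - r := by rw [hr]; ring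
    rw [h1, h2, map_sub, hCH, zero_sub, neg_sq, sq, ← map_mul, hr2, map_zero]
  -- transport
  set Φ : Matrix (Fin s) (Fin s) C →ₐ[R]
      Matrix (Fin s × (Fin k → ZMod 2)) (Fin s × (Fin k → ZMod 2)) R :=
    (Matrix.compAlgEquiv (Fin s) (Fin k → ZMod 2) R R).toAlgHom.comp
      (AlgHom.mapMatrix (KRaux.phi k R)) with hPhi
  have hΦB : Φ B = M := by
    ext ⟨p', i⟩ ⟨q', j⟩
    rw [hPhi]
    show (Matrix.compAlgEquiv (Fin s) (Fin k → ZMod 2) R R)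
      ((AlgHom.mapMatrix (KRaux.phi k R)) B) (p', i) (q', j) = M (p', i) (q', j)
    rw [Matrix.compAlgEquiv_apply, AlgHom.mapMatrix_apply, Matrix.comp_apply, Matrix.map_apply, hB,
      Matrix.of_apply, KRaux.phi_symm_apply, hM]
  rw [← hΦB, Polynomial.aeval_algHom_apply, ← map_pow, key, map_zero]
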